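/- arXiv:1310.3164 — 3 statements merged into one kernel-verified Lean document; each statement's English description precedes it below -/
import Mathlib

section
/- For every rook placement D ⊆ Φ⁺, every λ ∈ Ω_D, and all 1 ≤ j < i ≤ n, one has rank π_{i,j}(λ) = (R_D)_{i,j}. -/
/-- The set of positive roots of `A_{n-1}`, encoded as pairs `(i,j)` with `1 ≤ j < i ≤ n`. -/
def PhiPos (n : ℕ) : Finset (ℕ × ℕ) :=
  (Finset.Icc 1 n ×ˢ Finset.Icc 1 n).filter (fun p => p.2 < p.1)

/-- `D` is a rook placement: a subset of `Φ⁺` whose distinct elements never share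
a row or a column. -/
def IsRP (n : ℕ) (D : Finset (ℕ × ℕ)) : Prop :=
  D ⊆ PhiPos n ∧ ∀ p ∈ D, ∀ q ∈ D, p ≠ q → p.1 ≠ q.1 ∧ p.2 ≠ q.2
/-- The rank matrix: `(R_D)_{i,j} = #{(p,q) ∈ D : p ≥ i, q ≤ j}` for `i > j`, else `0`. -/
def RD (D : Finset (ℕ × ℕ)) (i j : ℕ) : ℕ :=
  if j < i then (D.filter (fun p => i ≤ p.1 ∧ p.2 ≤ j)).card else 0

/-- The partial order on rook placements: `D ≤ D'` iff `R_D ≤ R_{D'}` entrywise. -/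
def rpLE (D D' : Finset (ℕ × ℕ)) : Prop := ∀ i j, RD D i j ≤ RD D' i j

/-- Strict version of the order on rook placements. -/
def rpLT (D D' : Finset (ℕ × ℕ)) : Prop := rpLE D D' ∧ D ≠ D'
/-- Strictly lower-triangular part of a matrix. -/
def lowPart {n : ℕ} (X : Matrix (Fin n) (Fin n) ℂ) : Matrix (Fin n) (Fin n) ℂ :=
  Matrix.of fun i j => if (j : ℕ) < (i : ℕ) then X i j else 0

/-- Upper-triangular matrix (an element of `B` must moreover be invertible). -/
def IsUpperTri {n : ℕ} (b : Matrix (Fin n) (Fin n) ℂ) : Prop :=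
  ∀ i j : Fin n, (j : ℕ) < (i : ℕ) → b i j = 0

/-- Upper unitriangular matrix, i.e. an element of `U`. -/
def IsUnitri {n : ℕ} (u : Matrix (Fin n) (Fin n) ℂ) : Prop :=
  IsUpperTri u ∧ ∀ i, u i i = 1

/-- The matrix `f_D` of a rook placement: entry `1` at the (1-based) positions in `D`. -/
def fD (n : ℕ) (D : Finset (ℕ × ℕ)) : Matrix (Fin n) (Fin n) ℂ :=
  Matrix.of fun i j => if ((i : ℕ) + 1, (j : ℕ) + 1) ∈ D then 1 else 0

/-- The matrix `f_{D,ξ}`: entry `ξ(i,j)` at the (1-based) positions `(i,j) ∈ D`. -/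
def fDxi (n : ℕ) (D : Finset (ℕ × ℕ)) (ξ : ℕ × ℕ → ℂ) : Matrix (Fin n) (Fin n) ℂ :=
  Matrix.of fun i j =>
    if ((i : ℕ) + 1, (j : ℕ) + 1) ∈ D then ξ ((i : ℕ) + 1, (j : ℕ) + 1) else 0

/-- The coadjoint action `b.λ = (b λ b⁻¹)_low`. -/
noncomputable def coact {n : ℕ} (b l : Matrix (Fin n) (Fin n) ℂ) :
    Matrix (Fin n) (Fin n) ℂ := lowPart (b * l * b⁻¹)

/-- The `B`-orbit `Ω_D = B.f_D`. -/
noncomputable def Omega (n : ℕ) (D : Finset (ℕ × ℕ)) : Set (Matrix (Fin n) (Fin n) ℂ) :=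
  {l | ∃ b, IsUnit b ∧ IsUpperTri b ∧ l = coact b (fD n D)}

/-- The `U`-orbit `Θ_{D,ξ} = U.f_{D,ξ}`. -/
noncomputable def Theta (n : ℕ) (D : Finset (ℕ × ℕ)) (ξ : ℕ × ℕ → ℂ) :
    Set (Matrix (Fin n) (Fin n) ℂ) :=
  {l | ∃ u, IsUnitri u ∧ l = coact u (fDxi n D ξ)}
/-- `rank π_{i,j}(X)`: the rank of the submatrix of `X` on rows `i, i+1, …, n` and
columns `1, …, j` (1-based coordinates). -/
noncomputable def piRank {n : ℕ} (X : Matrix (Fin n) (Fin n) ℂ) (i j : ℕ) : ℕ :=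
  (X.submatrix (fun r : {r : Fin n // i ≤ (r : ℕ) + 1} => (r : Fin n))
    (fun c : {c : Fin n // (c : ℕ) + 1 ≤ j} => (c : Fin n))).rank


open Matrix Finset

lemma sum_subtype_of_vanish {n : ℕ} {p : Fin n → Prop} [DecidablePred p] (g : Fin n → ℂ)
    (h : ∀ k, ¬ p k → g k = 0) : ∑ k : {k // p k}, g (k : Fin n) = ∑ k, g k := by
  classical
  rw [← Finset.sum_filter_of_ne (s := Finset.univ) (p := p)
      (fun x _ hx => by by_contra hp; exact hx (h x hp))]
  exact (Finset.sum_subtype _ (by simp) g).symm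

lemma isUpperTri_iff_blockTriangular {n : ℕ} (b : Matrix (Fin n) (Fin n) ℂ) :
    IsUpperTri b ↔ b.BlockTriangular id := by
  constructor
  · intro h i j hij; exact h i j hij
  · intro h i j hij; exact h hij

lemma diag_ne_zero {n : ℕ} (b : Matrix (Fin n) (Fin n) ℂ) (hb : IsUpperTri b)
    (hu : IsUnit b.det) : ∀ k, b k k ≠ 0 := by
  intro k
  rw [Matrix.det_of_upperTriangular ((isUpperTri_iff_blockTriangular b).1 hb)] at hu
  intro h0
  exact hu.ne_zero (Finset.prod_eq_zero (Finset.mem_univ k) h0)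

lemma det_submatrix_isUnit {n : ℕ} (b : Matrix (Fin n) (Fin n) ℂ) (hb : IsUpperTri b)
    (hu : IsUnit b.det) {p : Fin n → Prop} [DecidablePred p] :
    IsUnit ((b.submatrix (fun r : {r // p r} => (r : Fin n))
      (fun r : {r // p r} => (r : Fin n))).det) := by
  have htri : (b.submatrix (fun r : {r // p r} => (r : Fin n))
      (fun r : {r // p r} => (r : Fin n))).BlockTriangular id := by
    intro x y hxy
    have h2 : ((y : Fin n) : ℕ) < ((x : Fin n) : ℕ) := hxy
    exact hb x y h2
  rw [Matrix.det_of_upperTriangular htri, isUnit_iff_ne_zero]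
  exact Finset.prod_ne_zero_iff.2 fun x _ => diag_ne_zero b hb hu x

lemma inv_isUpperTri {n : ℕ} (b : Matrix (Fin n) (Fin n) ℂ) (hb : IsUpperTri b)
    (hu : IsUnit b.det) : IsUpperTri b⁻¹ := by
  have : Invertible b := b.invertibleOfIsUnitDet hu
  exact (isUpperTri_iff_blockTriangular _).2
    (Matrix.blockTriangular_inv_of_blockTriangular ((isUpperTri_iff_blockTriangular b).1 hb))

lemma conj_submatrix {n : ℕ} (i j : ℕ) (b X t : Matrix (Fin n) (Fin n) ℂ)
    (hb : IsUpperTri b) (ht : IsUpperTri t) :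
    ((b * X * t).submatrix (fun r : {r : Fin n // i ≤ (r : ℕ) + 1} => (r : Fin n))
      (fun c : {c : Fin n // (c : ℕ) + 1 ≤ j} => (c : Fin n)))
    = (b.submatrix (fun r : {r : Fin n // i ≤ (r : ℕ) + 1} => (r : Fin n))
        (fun r : {r : Fin n // i ≤ (r : ℕ) + 1} => (r : Fin n)))
      * (X.submatrix (fun r : {r : Fin n // i ≤ (r : ℕ) + 1} => (r : Fin n))
        (fun c : {c : Fin n // (c : ℕ) + 1 ≤ j} => (c : Fin n)))
      * (t.submatrix (fun c : {c : Fin n // (c : ℕ) + 1 ≤ j} => (c : Fin n))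
        (fun c : {c : Fin n // (c : ℕ) + 1 ≤ j} => (c : Fin n))) := by
  classical
  ext r c
  simp only [Matrix.submatrix_apply, Matrix.mul_apply]
  rw [← sum_subtype_of_vanish (p := fun m : Fin n => (m : ℕ) + 1 ≤ j)
      (g := fun m => (∑ k, b (r : Fin n) k * X k m) * t m (c : Fin n))
      (fun m hm => by
        have hcm : ((c : Fin n) : ℕ) < (m : ℕ) := by omega
        show (∑ k, b (r : Fin n) k * X k m) * t m (c : Fin n) = 0
        rw [ht m c hcm, mul_zero])]
  refine Finset.sum_congr rfl fun m _ => ?_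
  congr 1
  rw [← sum_subtype_of_vanish (p := fun k : Fin n => i ≤ (k : ℕ) + 1)
      (g := fun k => b (r : Fin n) k * X k (m : Fin n))
      (fun k hk => by
        have hkr : (k : ℕ) < ((r : Fin n) : ℕ) := by have := r.2; omega
        show b (r : Fin n) k * X k (m : Fin n) = 0
        rw [hb r k hkr, zero_mul])]

lemma rank_fD_submatrix {n : ℕ} (D : Finset (ℕ × ℕ)) (hD : IsRP n D) (i j : ℕ)
    (h1 : 1 ≤ j) (h2 : j < i) (_h3 : i ≤ n) :
    ((fD n D).submatrix (fun r : {r : Fin n // i ≤ (r : ℕ) + 1} => (r : Fin n))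
      (fun c : {c : Fin n // (c : ℕ) + 1 ≤ j} => (c : Fin n))).rank
    = (D.filter (fun p => i ≤ p.1 ∧ p.2 ≤ j)).card := by
  classical
  set E := D.filter (fun p => i ≤ p.1 ∧ p.2 ≤ j) with hE
  have hbnd : ∀ e ∈ E, 1 ≤ e.2 ∧ e.2 < e.1 ∧ e.1 ≤ n ∧ i ≤ e.1 ∧ e.2 ≤ j := by
    intro e he
    rw [hE, Finset.mem_filter] at he
    have h := hD.1 he.1
    simp only [PhiPos, Finset.mem_filter, Finset.mem_product, Finset.mem_Icc] at h
    omega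
  set M0 := ((fD n D).submatrix (fun r : {r : Fin n // i ≤ (r : ℕ) + 1} => (r : Fin n))
      (fun c : {c : Fin n // (c : ℕ) + 1 ≤ j} => (c : Fin n))) with hM0
  set ρ : {e // e ∈ E} → {r : Fin n // i ≤ (r : ℕ) + 1} :=
    fun e => ⟨⟨e.1.1 - 1, by have := hbnd e.1 e.2; omega⟩,
      show i ≤ (e.1.1 - 1) + 1 by have := hbnd e.1 e.2; omega⟩ with hρdef
  set γ : {e // e ∈ E} → {c : Fin n // (c : ℕ) + 1 ≤ j} :=
    fun e => ⟨⟨e.1.2 - 1, by have := hbnd e.1 e.2; omega⟩,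
      show (e.1.2 - 1) + 1 ≤ j by have := hbnd e.1 e.2; omega⟩ with hγdef
  have hρ : ∀ e : {e // e ∈ E}, ((ρ e : Fin n) : ℕ) + 1 = e.1.1 := by
    intro e; have := hbnd e.1 e.2; simp [hρdef]; omega
  have hγ : ∀ e : {e // e ∈ E}, ((γ e : Fin n) : ℕ) + 1 = e.1.2 := by
    intro e; have := hbnd e.1 e.2; simp [hγdef]; omega
  set P : Matrix {r : Fin n // i ≤ (r : ℕ) + 1} {e // e ∈ E} ℂ :=
    fun r e => if r = ρ e then 1 else 0 with hP
  set Q : Matrix {e // e ∈ E} {c : Fin n // (c : ℕ) + 1 ≤ j} ℂ :=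
    fun e c => if c = γ e then 1 else 0 with hQ
  have hkey : ∀ (r : {r : Fin n // i ≤ (r : ℕ) + 1}) (c : {c : Fin n // (c : ℕ) + 1 ≤ j})
      (e : {e // e ∈ E}),
      (r = ρ e ∧ c = γ e) ↔ e.1 = (((r : Fin n) : ℕ) + 1, ((c : Fin n) : ℕ) + 1) := by
    intro r c e
    constructor
    · rintro ⟨hr, hc⟩
      have ha := hρ e; have hb := hγ e
      rw [← hr] at ha; rw [← hc] at hb
      exact Prod.ext ha.symm hb.symm
    · intro h
      have ha := hρ e; have hb := hγ e
      rw [h] at ha hb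
      constructor
      · exact Subtype.ext (Fin.ext (by omega))
      · exact Subtype.ext (Fin.ext (by omega))
  have hPQ : M0 = P * Q := by
    ext r c
    rw [Matrix.mul_apply]
    have hterm : ∀ e : {e // e ∈ E}, P r e * Q e c =
        if e.1 = (((r : Fin n) : ℕ) + 1, ((c : Fin n) : ℕ) + 1) then 1 else 0 := by
      intro e
      rw [hP, hQ]
      simp only [← hkey r c e, ite_and, ite_mul, one_mul, zero_mul]
    rw [Finset.sum_congr rfl (fun e _ => hterm e),
      Finset.sum_coe_sort E (fun x => if x = (((r : Fin n) : ℕ) + 1, ((c : Fin n) : ℕ) + 1)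
        then (1 : ℂ) else 0),
      Finset.sum_ite_eq' E _ (fun _ => (1 : ℂ))]
    have hEiff : ((((r : Fin n) : ℕ) + 1, ((c : Fin n) : ℕ) + 1) ∈ E) ↔
        ((((r : Fin n) : ℕ) + 1, ((c : Fin n) : ℕ) + 1) ∈ D) := by
      simp [hE, Finset.mem_filter, r.2, c.2]
    rw [hM0]
    simp only [Matrix.submatrix_apply, fD, Matrix.of_apply, hEiff]
  have hPM : ∀ (e : {e // e ∈ E}) (c : {c : Fin n // (c : ℕ) + 1 ≤ j}),
      (Pᵀ * M0) e c = M0 (ρ e) c := by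
    intro e c
    rw [Matrix.mul_apply]
    simp only [Matrix.transpose_apply]
    simp only [hP, ite_mul, one_mul, zero_mul]
    rw [Finset.sum_ite_eq' Finset.univ (ρ e) (fun r => M0 r c)]
    simp
  have hone : Pᵀ * M0 * Qᵀ = (1 : Matrix {e // e ∈ E} {e // e ∈ E} ℂ) := by
    ext e e'
    rw [Matrix.mul_apply]
    simp only [Matrix.transpose_apply]
    simp only [hQ, mul_ite, mul_one, mul_zero]
    rw [Finset.sum_ite_eq' Finset.univ (γ e') (fun c => (Pᵀ * M0) e c)]
    simp only [Finset.mem_univ, if_true]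
    rw [hPM e (γ e')]
    have hentry : M0 (ρ e) (γ e') = if ((e : ℕ × ℕ).1, (e' : ℕ × ℕ).2) ∈ D then 1 else 0 := by
      rw [hM0]
      simp only [Matrix.submatrix_apply, fD, Matrix.of_apply, hρ e, hγ e']
    rw [hentry]
    by_cases hee : e = e'
    · subst hee
      have : ((e : ℕ × ℕ).1, (e : ℕ × ℕ).2) ∈ D := by
        have := (Finset.mem_filter.1 e.2).1
        simpa using this
      simp [this, Matrix.one_apply]
    · have : ((e : ℕ × ℕ).1, (e' : ℕ × ℕ).2) ∉ D := by
        intro hmem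
        have he1 : (e : ℕ × ℕ) ∈ D := (Finset.mem_filter.1 e.2).1
        have he2 : (e' : ℕ × ℕ) ∈ D := (Finset.mem_filter.1 e'.2).1
        have hq1 : ((e : ℕ × ℕ).1, (e' : ℕ × ℕ).2) = (e : ℕ × ℕ) := by
          by_contra hne
          exact (hD.2 _ hmem _ he1 hne).1 rfl
        have hq2 : ((e : ℕ × ℕ).1, (e' : ℕ × ℕ).2) = (e' : ℕ × ℕ) := by
          by_contra hne
          exact (hD.2 _ hmem _ he2 hne).2 rfl
        exact hee (Subtype.ext (hq1.symm.trans hq2))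
      simp [this, Matrix.one_apply, hee]
  have hle : M0.rank ≤ E.card := by
    calc M0.rank = (P * Q).rank := by rw [hPQ]
      _ ≤ P.rank := Matrix.rank_mul_le_left P Q
      _ ≤ Fintype.card {e // e ∈ E} := Matrix.rank_le_card_width P
      _ = E.card := Fintype.card_coe E
  have hge : E.card ≤ M0.rank := by
    calc E.card = Fintype.card {e // e ∈ E} := (Fintype.card_coe E).symm
      _ = (1 : Matrix {e // e ∈ E} {e // e ∈ E} ℂ).rank := (Matrix.rank_one).symm
      _ = (Pᵀ * M0 * Qᵀ).rank := by rw [hone]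
      _ ≤ (Pᵀ * M0).rank := Matrix.rank_mul_le_left _ _
      _ ≤ M0.rank := Matrix.rank_mul_le_right _ _
  omega

lemma lowPart_submatrix {n : ℕ} (i j : ℕ) (h2 : j < i) (X : Matrix (Fin n) (Fin n) ℂ) :
    ((lowPart X).submatrix (fun r : {r : Fin n // i ≤ (r : ℕ) + 1} => (r : Fin n))
      (fun c : {c : Fin n // (c : ℕ) + 1 ≤ j} => (c : Fin n)))
    = (X.submatrix (fun r : {r : Fin n // i ≤ (r : ℕ) + 1} => (r : Fin n))
      (fun c : {c : Fin n // (c : ℕ) + 1 ≤ j} => (c : Fin n))) := by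
  ext r c
  have hlt : ((c : Fin n) : ℕ) < ((r : Fin n) : ℕ) := by
    have := r.2; have := c.2; omega
  simp only [Matrix.submatrix_apply, lowPart, Matrix.of_apply, if_pos hlt]
/-- For every rook placement `D`, every `λ ∈ Ω_D`, and all `1 ≤ j < i ≤ n`,
`rank π_{i,j}(λ) = (R_D)_{i,j}`. -/
theorem piRank_mem_omega (n : ℕ) (D : Finset (ℕ × ℕ)) (hD : IsRP n D)
    (l : Matrix (Fin n) (Fin n) ℂ) (hl : l ∈ Omega n D)
    (i j : ℕ) (h1 : 1 ≤ j) (h2 : j < i) (h3 : i ≤ n) :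
    piRank l i j = RD D i j := by
  classical
  obtain ⟨b, hbu, hbt, hleq⟩ := hl
  have hdet : IsUnit b.det := (Matrix.isUnit_iff_isUnit_det b).1 hbu
  have hinvt : IsUpperTri b⁻¹ := inv_isUpperTri b hbt hdet
  have hinvdet : IsUnit (b⁻¹).det := Matrix.isUnit_nonsing_inv_det b hdet
  rw [RD, if_pos h2]
  rw [hleq, piRank, coact, lowPart_submatrix i j h2,
    conj_submatrix i j b (fD n D) b⁻¹ hbt hinvt,
    Matrix.rank_mul_eq_left_of_isUnit_det _ _ (det_submatrix_isUnit b⁻¹ hinvt hinvdet),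
    Matrix.rank_mul_eq_right_of_isUnit_det _ _ (det_submatrix_isUnit b hbt hdet)]
  exact rank_fD_submatrix D hD i j h1 h2 h3
end

section
/- Let D, D' ⊆ Φ⁺ be rook placements. If Ω_D is contained in the closure of Ω_{D'}, then σ_D ≤_B σ_{D'} in the Bruhat–Chevalley order on S_{2n−2}. -/
/-- The Kerov involution `σ_D ∈ S_{2n−2}` of a rook placement, as a function:
it exchanges `2i − 2` and `2j − 1` for every rook `(i,j) ∈ D` and fixes everything else. -/
noncomputable def kerov (D : Finset (ℕ × ℕ)) (a : ℕ) : ℕ :=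
  if h : ∃ p ∈ D, a = 2 * p.1 - 2 then 2 * h.choose.2 - 1
  else if h' : ∃ p ∈ D, a = 2 * p.2 - 1 then 2 * h'.choose.1 - 2
  else a

/-- The Bruhat–Chevalley order on permutations of `{1, …, N}`, via the standard
rank-matrix criterion. -/
def bruhatLE (N : ℕ) (σ τ : ℕ → ℕ) : Prop :=
  ∀ i ∈ Finset.Icc 1 N, ∀ j ∈ Finset.Icc 1 N,
    ((Finset.Icc 1 N).filter (fun a => a ≤ i ∧ j ≤ σ a)).card ≤
      ((Finset.Icc 1 N).filter (fun a => a ≤ i ∧ j ≤ τ a)).card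

lemma mem_PhiPos_iff {n : ℕ} {p : ℕ × ℕ} :
    p ∈ PhiPos n ↔ 1 ≤ p.2 ∧ p.2 < p.1 ∧ p.1 ≤ n := by
  simp only [PhiPos, Finset.mem_filter, Finset.mem_product, Finset.mem_Icc]
  omega

lemma rook_eq_of_fst {n : ℕ} {D : Finset (ℕ × ℕ)} (hD : IsRP n D) {p q : ℕ × ℕ}
    (hp : p ∈ D) (hq : q ∈ D) (h : p.1 = q.1) : p = q := by
  by_contra hne; exact (hD.2 p hp q hq hne).1 h

lemma rook_eq_of_snd {n : ℕ} {D : Finset (ℕ × ℕ)} (hD : IsRP n D) {p q : ℕ × ℕ}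
    (hp : p ∈ D) (hq : q ∈ D) (h : p.2 = q.2) : p = q := by
  by_contra hne; exact (hD.2 p hp q hq hne).2 h

/-- `f_D` itself lies in `Ω_D`. -/
lemma fD_mem_Omega (n : ℕ) (D : Finset (ℕ × ℕ)) (hD : IsRP n D) : fD n D ∈ Omega n D := by
  refine ⟨1, isUnit_one, ?_, ?_⟩
  · intro i j hij
    exact Matrix.one_apply_ne (by omega : i ≠ j)
  · rw [coact, inv_one, Matrix.one_mul, Matrix.mul_one]
    ext i j
    simp only [lowPart, Matrix.of_apply]
    by_cases hij : (j : ℕ) < (i : ℕ)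
    · rw [if_pos hij]
    · rw [if_neg hij]
      simp only [fD, Matrix.of_apply]
      rw [if_neg]
      intro hmem
      have := mem_PhiPos_iff.mp (hD.1 hmem)
      simp only at this
      omega

/-- rank of `f_E` is at most `E.card`. -/
lemma rank_fD_le (n : ℕ) (E : Finset (ℕ × ℕ))
    (hE : ∀ p ∈ E, 1 ≤ p.2 ∧ p.2 < p.1 ∧ p.1 ≤ n) :
    (fD n E).rank ≤ E.card := by
  classical
  set P : Matrix (Fin n) {x // x ∈ E} ℂ :=
    Matrix.of (fun i p => if (i : ℕ) + 1 = p.1.1 then 1 else 0) with hP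
  set Q : Matrix {x // x ∈ E} (Fin n) ℂ :=
    Matrix.of (fun p j => if (j : ℕ) + 1 = p.1.2 then 1 else 0) with hQ
  have hPQ : fD n E = P * Q := by
    ext i j
    rw [Matrix.mul_apply]
    by_cases hm : ((i : ℕ) + 1, (j : ℕ) + 1) ∈ E
    · rw [Fintype.sum_eq_single (⟨((i : ℕ) + 1, (j : ℕ) + 1), hm⟩ : {x // x ∈ E})]
      · simp [fD, hP, hQ, hm]
      · intro p hp
        simp only [hP, hQ, Matrix.of_apply]
        rcases eq_or_ne ((i : ℕ) + 1) p.1.1 with h1 | h1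
        · rcases eq_or_ne ((j : ℕ) + 1) p.1.2 with h2 | h2
          · exfalso; apply hp; apply Subtype.ext
            exact Prod.ext h1.symm h2.symm
          · rw [if_neg h2, mul_zero]
        · rw [if_neg h1, zero_mul]
    · simp only [fD, Matrix.of_apply, if_neg hm]
      symm
      apply Finset.sum_eq_zero
      intro p _
      simp only [hP, hQ, Matrix.of_apply]
      rcases eq_or_ne ((i : ℕ) + 1) p.1.1 with h1 | h1
      · rcases eq_or_ne ((j : ℕ) + 1) p.1.2 with h2 | h2
        · exfalso; apply hm
          have : p.1 = ((i : ℕ) + 1, (j : ℕ) + 1) := Prod.ext h1.symm h2.symm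
          rw [← this]; exact p.2
        · rw [if_neg h2, mul_zero]
      · rw [if_neg h1, zero_mul]
  calc (fD n E).rank = (P * Q).rank := by rw [hPQ]
    _ ≤ P.rank := Matrix.rank_mul_le_left P Q
    _ ≤ Fintype.card {x // x ∈ E} := Matrix.rank_le_card_width P
    _ = E.card := Fintype.card_coe E

/-- Main geometric lemma: corner counts are monotone under orbit closure containment. -/
lemma corner_card_le (n : ℕ) (D D' : Finset (ℕ × ℕ)) (hD : IsRP n D) (hD' : IsRP n D')
    (h : Omega n D ⊆ closure (Omega n D')) (r c : ℕ) (hcr : c < r) :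
    (D.filter fun p => r ≤ p.1 ∧ p.2 ≤ c).card
      ≤ (D'.filter fun p => r ≤ p.1 ∧ p.2 ≤ c).card := by
  classical
  set E := D.filter (fun p => r ≤ p.1 ∧ p.2 ≤ c) with hE
  set E' := D'.filter (fun p => r ≤ p.1 ∧ p.2 ≤ c) with hE'
  have hEmem : ∀ p ∈ E, 1 ≤ p.2 ∧ p.2 < p.1 ∧ p.1 ≤ n ∧ r ≤ p.1 ∧ p.2 ≤ c := by
    intro p hp
    rw [hE, Finset.mem_filter] at hp
    have := mem_PhiPos_iff.mp (hD.1 hp.1)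
    exact ⟨this.1, this.2.1, this.2.2, hp.2.1, hp.2.2⟩
  set ρ : {x // x ∈ E} → Fin n := fun p => ⟨p.1.1 - 1, by have := hEmem p.1 p.2; omega⟩ with hρ
  set γ : {x // x ∈ E} → Fin n := fun p => ⟨p.1.2 - 1, by have := hEmem p.1 p.2; omega⟩ with hγ
  -- the submatrix of f_D on the rooks of E is the identity
  have hone : (fD n D).submatrix ρ γ = 1 := by
    ext p q
    simp only [Matrix.submatrix_apply, fD, Matrix.of_apply, hρ, hγ]
    have hp := hEmem p.1 p.2
    have hq := hEmem q.1 q.2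
    have e1 : p.1.1 - 1 + 1 = p.1.1 := by omega
    have e2 : q.1.2 - 1 + 1 = q.1.2 := by omega
    rw [e1, e2]
    rcases eq_or_ne p q with rfl | hne
    · rw [if_pos, Matrix.one_apply_eq]
      have : (p.1.1, p.1.2) = p.1 := rfl
      rw [this]
      exact Finset.mem_of_mem_filter _ p.2
    · rw [Matrix.one_apply_ne hne, if_neg]
      intro hmem
      have hpD : p.1 ∈ D := Finset.mem_of_mem_filter _ p.2
      have hqD : q.1 ∈ D := Finset.mem_of_mem_filter _ q.2
      have h1 : (p.1.1, q.1.2) = p.1 := rook_eq_of_fst hD hmem hpD rfl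
      have h2 : (p.1.1, q.1.2) = q.1 := rook_eq_of_snd hD hmem hqD rfl
      exact hne (Subtype.ext (h1 ▸ h2))
  -- continuity of the minor
  have hcont : Continuous fun X : Matrix (Fin n) (Fin n) ℂ => (X.submatrix ρ γ).det :=
    (continuous_id.matrix_submatrix ρ γ).matrix_det
  have hopen : IsOpen {X : Matrix (Fin n) (Fin n) ℂ | (X.submatrix ρ γ).det ≠ 0} :=
    (isOpen_compl_singleton (x := (0 : ℂ))).preimage hcont
  have hfD1 : ((fD n D).submatrix ρ γ).det ≠ 0 := by
    rw [hone, Matrix.det_one]; exact one_ne_zero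
  have hcl : fD n D ∈ closure (Omega n D') := h (fD_mem_Omega n D hD)
  obtain ⟨y, hy1, hy2⟩ := _root_.mem_closure_iff.mp hcl _ hopen hfD1
  obtain ⟨b, hbU, hbT, rfl⟩ := hy2
  -- b⁻¹ is upper triangular
  have hbd : IsUnit b.det := (Matrix.isUnit_iff_isUnit_det b).mp hbU
  haveI : Invertible b := b.invertibleOfIsUnitDet hbd
  have hbinvT : IsUpperTri b⁻¹ := by
    intro i j hij
    exact Matrix.blockTriangular_inv_of_blockTriangular
      (b := fun i : Fin n => (i : ℕ)) (fun i j hij => hbT i j hij) hij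
  -- the submatrix of the orbit point factors
  set A : Matrix {x // x ∈ E} (Fin n) ℂ := b.submatrix ρ id with hA
  set B : Matrix (Fin n) {x // x ∈ E} ℂ := b⁻¹.submatrix id γ with hB
  set G : Matrix (Fin n) (Fin n) ℂ := fD n (D'.filter fun p => r ≤ p.1) with hG
  have step1 : (coact b (fD n D')).submatrix ρ γ = (b * fD n D' * b⁻¹).submatrix ρ γ := by
    ext p q
    simp only [Matrix.submatrix_apply, coact, lowPart, Matrix.of_apply]
    rw [if_pos]
    have hp := hEmem p.1 p.2
    have hq := hEmem q.1 q.2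
    show q.1.2 - 1 < p.1.1 - 1
    omega
  have step2 : (b * fD n D' * b⁻¹).submatrix ρ γ = A * fD n D' * B := by
    ext p q
    rfl
  have step3 : A * fD n D' = A * G := by
    ext p l
    rw [Matrix.mul_apply, Matrix.mul_apply]
    apply Finset.sum_congr rfl
    intro k _
    by_cases hk : r ≤ (k : ℕ) + 1
    · congr 1
      simp only [fD, hG, Matrix.of_apply, Finset.mem_filter]
      by_cases hm : ((k : ℕ) + 1, (l : ℕ) + 1) ∈ D'
      · rw [if_pos hm, if_pos ⟨hm, hk⟩]
      · rw [if_neg hm, if_neg (by tauto)]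
    · have hz : A p k = 0 := by
        have hp := hEmem p.1 p.2
        apply hbT
        show ((k : Fin n) : ℕ) < ((⟨p.1.1 - 1, _⟩ : Fin n) : ℕ)
        simp only [Fin.val_mk]
        omega
      rw [hz, zero_mul, zero_mul]
  have step4 : G * B = fD n E' * B := by
    ext k q
    rw [Matrix.mul_apply, Matrix.mul_apply]
    apply Finset.sum_congr rfl
    intro l _
    by_cases hl : (l : ℕ) + 1 ≤ c
    · congr 1
      simp only [fD, hG, hE', Matrix.of_apply, Finset.mem_filter]
      by_cases hm : ((k : ℕ) + 1, (l : ℕ) + 1) ∈ D'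
      · by_cases hr : r ≤ (k : ℕ) + 1
        · rw [if_pos ⟨hm, hr⟩, if_pos ⟨hm, hr, hl⟩]
        · rw [if_neg (by tauto), if_neg (by tauto)]
      · rw [if_neg (by tauto), if_neg (by tauto)]
    · have hz : B l q = 0 := by
        have hq := hEmem q.1 q.2
        apply hbinvT
        show ((⟨q.1.2 - 1, _⟩ : Fin n) : ℕ) < ((l : Fin n) : ℕ)
        simp only [Fin.val_mk]
        omega
      rw [hz, mul_zero, mul_zero]
  have key : (coact b (fD n D')).submatrix ρ γ = A * (fD n E' * B) := by
    rw [step1, step2, step3, Matrix.mul_assoc, step4]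
  -- rank bookkeeping
  have hSunit : IsUnit ((coact b (fD n D')).submatrix ρ γ) :=
    (Matrix.isUnit_iff_isUnit_det _).mpr (isUnit_iff_ne_zero.mpr hy1)
  have hrankS : ((coact b (fD n D')).submatrix ρ γ).rank = E.card := by
    rw [Matrix.rank_of_isUnit _ hSunit, Fintype.card_coe]
  have hE'mem : ∀ p ∈ E', 1 ≤ p.2 ∧ p.2 < p.1 ∧ p.1 ≤ n := by
    intro p hp
    rw [hE', Finset.mem_filter] at hp
    exact mem_PhiPos_iff.mp (hD'.1 hp.1)
  calc E.card = ((coact b (fD n D')).submatrix ρ γ).rank := hrankS.symm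
    _ = (A * (fD n E' * B)).rank := by rw [key]
    _ ≤ (fD n E' * B).rank := Matrix.rank_mul_le_right _ _
    _ ≤ (fD n E').rank := Matrix.rank_mul_le_left _ _
    _ ≤ E'.card := rank_fD_le n E' hE'mem


lemma kerov_apply_fst {n : ℕ} {D : Finset (ℕ × ℕ)} (hD : IsRP n D) {p : ℕ × ℕ}
    (hp : p ∈ D) : kerov D (2 * p.1 - 2) = 2 * p.2 - 1 := by
  have hb := mem_PhiPos_iff.mp (hD.1 hp)
  have h : ∃ q ∈ D, 2 * p.1 - 2 = 2 * q.1 - 2 := ⟨p, hp, rfl⟩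
  rw [kerov, dif_pos h]
  obtain ⟨hq, hqe⟩ := h.choose_spec
  have hb' := mem_PhiPos_iff.mp (hD.1 hq)
  have h1 : h.choose.1 = p.1 := by omega
  rw [rook_eq_of_fst hD hq hp h1]

lemma kerov_apply_snd {n : ℕ} {D : Finset (ℕ × ℕ)} (hD : IsRP n D) {p : ℕ × ℕ}
    (hp : p ∈ D) : kerov D (2 * p.2 - 1) = 2 * p.1 - 2 := by
  have hb := mem_PhiPos_iff.mp (hD.1 hp)
  have h0 : ¬ ∃ q ∈ D, 2 * p.2 - 1 = 2 * q.1 - 2 := by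
    rintro ⟨q, hq, he⟩
    have hb' := mem_PhiPos_iff.mp (hD.1 hq)
    omega
  have h : ∃ q ∈ D, 2 * p.2 - 1 = 2 * q.2 - 1 := ⟨p, hp, rfl⟩
  rw [kerov, dif_neg h0, dif_pos h]
  obtain ⟨hq, hqe⟩ := h.choose_spec
  have hb' := mem_PhiPos_iff.mp (hD.1 hq)
  have h1 : h.choose.2 = p.2 := by omega
  rw [rook_eq_of_snd hD hq hp h1]

lemma kerov_fixed {D : Finset (ℕ × ℕ)} {a : ℕ}
    (h : ∀ q ∈ D, a ≠ 2 * q.1 - 2 ∧ a ≠ 2 * q.2 - 1) : kerov D a = a := by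
  rw [kerov, dif_neg, dif_neg]
  · rintro ⟨q, hq, he⟩; exact (h q hq).2 he
  · rintro ⟨q, hq, he⟩; exact (h q hq).1 he

lemma cnt_eq (n : ℕ) (D : Finset (ℕ × ℕ)) (hD : IsRP n D) (I J : ℕ) :
    ((Finset.Icc 1 (2 * n - 2)).filter fun a => a ≤ I ∧ J ≤ kerov D a).card
    = ((Finset.Icc 1 (2 * n - 2)).filter fun a => a ≤ I ∧ J ≤ a).card
      + (D.filter fun p =>
          2 * p.2 - 1 ≤ I ∧ 2 * p.2 - 1 < J ∧ J ≤ 2 * p.1 - 2 ∧ I < 2 * p.1 - 2).card := by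
  classical
  set N := 2 * n - 2 with hN
  set F : ℕ → ℤ := fun a =>
    (if a ≤ I ∧ J ≤ kerov D a then (1 : ℤ) else 0) - (if a ≤ I ∧ J ≤ a then 1 else 0) with hF
  have hinjx : ∀ p ∈ D, ∀ q ∈ D, 2 * p.1 - 2 = 2 * q.1 - 2 → p = q := by
    intro p hp q hq he
    have h1 := mem_PhiPos_iff.mp (hD.1 hp); have h2 := mem_PhiPos_iff.mp (hD.1 hq)
    exact rook_eq_of_fst hD hp hq (by omega)
  have hinjy : ∀ p ∈ D, ∀ q ∈ D, 2 * p.2 - 1 = 2 * q.2 - 1 → p = q := by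
    intro p hp q hq he
    have h1 := mem_PhiPos_iff.mp (hD.1 hp); have h2 := mem_PhiPos_iff.mp (hD.1 hq)
    exact rook_eq_of_snd hD hp hq (by omega)
  set M : Finset ℕ := D.image (fun p => 2 * p.1 - 2) ∪ D.image (fun p => 2 * p.2 - 1) with hM
  have hMsub : M ⊆ Finset.Icc 1 N := by
    intro a ha
    simp only [hM, Finset.mem_union, Finset.mem_image] at ha
    rcases ha with ⟨p, hp, rfl⟩ | ⟨p, hp, rfl⟩ <;>
      · have := mem_PhiPos_iff.mp (hD.1 hp)
        simp only [Finset.mem_Icc]; omega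
  have hvan : ∀ a ∈ Finset.Icc 1 N, a ∉ M → F a = 0 := by
    intro a _ haM
    have hfix : kerov D a = a := by
      apply kerov_fixed
      intro q hq
      simp only [hM, Finset.mem_union, Finset.mem_image, not_or, not_exists] at haM
      constructor
      · intro he; exact haM.1 q ⟨hq, he.symm⟩
      · intro he; exact haM.2 q ⟨hq, he.symm⟩
    simp only [hF, hfix, sub_self]
  have hdisj : Disjoint (D.image (fun p => 2 * p.1 - 2)) (D.image (fun p => 2 * p.2 - 1)) := by
    rw [Finset.disjoint_left]
    rintro a ha hb
    simp only [Finset.mem_image] at ha hb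
    obtain ⟨p, hp, hpe⟩ := ha; obtain ⟨q, hq, hqe⟩ := hb
    have h1 := mem_PhiPos_iff.mp (hD.1 hp); have h2 := mem_PhiPos_iff.mp (hD.1 hq)
    omega
  have main : ∑ a ∈ Finset.Icc 1 N, F a
      = ∑ p ∈ D, (if 2 * p.2 - 1 ≤ I ∧ 2 * p.2 - 1 < J ∧ J ≤ 2 * p.1 - 2 ∧ I < 2 * p.1 - 2
          then (1 : ℤ) else 0) := by
    rw [← Finset.sum_subset hMsub hvan, hM, Finset.sum_union hdisj,
      Finset.sum_image hinjx, Finset.sum_image hinjy, ← Finset.sum_add_distrib]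
    apply Finset.sum_congr rfl
    intro p hp
    have hb := mem_PhiPos_iff.mp (hD.1 hp)
    simp only [hF, kerov_apply_fst hD hp, kerov_apply_snd hD hp]
    split_ifs <;> omega
  have e1 : (((Finset.Icc 1 N).filter fun a => a ≤ I ∧ J ≤ kerov D a).card : ℤ)
      = ∑ a ∈ Finset.Icc 1 N, (if a ≤ I ∧ J ≤ kerov D a then (1 : ℤ) else 0) := by
    rw [Finset.card_filter]; push_cast; rfl
  have e2 : (((Finset.Icc 1 N).filter fun a => a ≤ I ∧ J ≤ a).card : ℤ)
      = ∑ a ∈ Finset.Icc 1 N, (if a ≤ I ∧ J ≤ a then (1 : ℤ) else 0) := by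
    rw [Finset.card_filter]; push_cast; rfl
  have e3 : ((D.filter fun p =>
          2 * p.2 - 1 ≤ I ∧ 2 * p.2 - 1 < J ∧ J ≤ 2 * p.1 - 2 ∧ I < 2 * p.1 - 2).card : ℤ)
      = ∑ p ∈ D, (if 2 * p.2 - 1 ≤ I ∧ 2 * p.2 - 1 < J ∧ J ≤ 2 * p.1 - 2 ∧ I < 2 * p.1 - 2
          then (1 : ℤ) else 0) := by
    rw [Finset.card_filter]; push_cast; rfl
  have : (((Finset.Icc 1 N).filter fun a => a ≤ I ∧ J ≤ kerov D a).card : ℤ)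
      = (((Finset.Icc 1 N).filter fun a => a ≤ I ∧ J ≤ a).card : ℤ)
        + ((D.filter fun p =>
          2 * p.2 - 1 ≤ I ∧ 2 * p.2 - 1 < J ∧ J ≤ 2 * p.1 - 2 ∧ I < 2 * p.1 - 2).card : ℤ) := by
    rw [e1, e2, e3, ← main, hF]
    rw [Finset.sum_sub_distrib]
    ring
  exact_mod_cast this


/-- Corollary 1.8: if `Ω_D` is contained in the closure of `Ω_{D'}`, then
`σ_D ≤_B σ_{D'}` in the Bruhat–Chevalley order on `S_{2n−2}`. -/
theorem kerov_bruhatLE_of_omega_subset_closure (n : ℕ) (hn : 2 ≤ n)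
    (D D' : Finset (ℕ × ℕ)) (hD : IsRP n D) (hD' : IsRP n D')
    (h : Omega n D ⊆ closure (Omega n D')) :
    bruhatLE (2 * n - 2) (kerov D) (kerov D') := by
  intro i hi j hj
  rw [cnt_eq n D hD i j, cnt_eq n D' hD' i j]
  set c := min ((i + 1) / 2) (j / 2) with hc
  set r := max ((j + 3) / 2) ((i + 4) / 2) with hr
  have hcr : c < r := by omega
  have hfilt : ∀ E : Finset (ℕ × ℕ), IsRP n E →
      E.filter (fun p => 2 * p.2 - 1 ≤ i ∧ 2 * p.2 - 1 < j ∧ j ≤ 2 * p.1 - 2 ∧ i < 2 * p.1 - 2)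
        = E.filter (fun p => r ≤ p.1 ∧ p.2 ≤ c) := by
    intro E hE
    apply Finset.filter_congr
    intro p hp
    have := mem_PhiPos_iff.mp (hE.1 hp)
    omega
  rw [hfilt D hD, hfilt D' hD']
  exact Nat.add_le_add_left (corner_card_le n D D' hD hD' h r c hcr) _
end

section
/- For every rook placement D ∈ ℛ, one has N⁺(D) ⊆ L⁺(D): every T ∈ N⁺(D) satisfies T < D, |T| > |D|, and every rook placement S with T ≤ S < D equals T. -/
/-- The partial order `≼` on `Φ⁺`: `(a,b) ≼ (c,d)` iff `a ≤ c` and `b ≥ d`. -/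
def Ple (p q : ℕ × ℕ) : Prop := p.1 ≤ q.1 ∧ q.2 ≤ p.2

/-- The strict order `≺` on `Φ⁺`. -/
def Plt (p q : ℕ × ℕ) : Prop := Ple p q ∧ p ≠ q
/-- `D ∩ R_k ≠ ∅`: row `k` is occupied. -/
def rowOcc (D : Finset (ℕ × ℕ)) (k : ℕ) : Prop := ∃ p ∈ D, p.1 = k

/-- `D ∩ C_k ≠ ∅`: column `k` is occupied. -/
def colOcc (D : Finset (ℕ × ℕ)) (k : ℕ) : Prop := ∃ p ∈ D, p.2 = k
/-- `T ∈ N⁺(D)`: `T = D^{α,β}_{(i,j)}` for some `(i,j) ∈ D` and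
`(α,β) ∈ C_{(i,j)}(D)`. -/
def inNp (D T : Finset (ℕ × ℕ)) : Prop :=
  ∃ i j a b, (i, j) ∈ D ∧ j < a ∧ a ≤ b ∧ b < i ∧
    ¬ rowOcc D a ∧ ¬ colOcc D b ∧
    (∀ k, a < k → k < b → rowOcc D k ∧ colOcc D k) ∧
    (∀ p ∈ D, Plt p (i, j) → ¬ Plt p (a, j) → Plt p (i, b)) ∧
    (a ≠ b → rowOcc D b ∧ colOcc D a) ∧
    T = insert (i, b) (insert (a, j) (D.erase (i, j)))

/-- `T ∈ L⁺(D)`: `T < D`, `|T| > |D|`, and every `S ∈ ℛ` with `T ≤ S < D` equals `T`. -/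
def inLp (n : ℕ) (D T : Finset (ℕ × ℕ)) : Prop :=
  IsRP n T ∧ rpLT T D ∧ D.card < T.card ∧
    ∀ S, IsRP n S → rpLE T S → rpLT S D → S = T

-- auxiliary definitions and lemmas
def cnt (A : Finset (ℕ × ℕ)) (r c : ℕ) : ℕ :=
  (A.filter (fun p => r ≤ p.1 ∧ p.2 ≤ c)).card

abbrev Rpred (a b i j : ℕ) (p : ℕ × ℕ) : Prop :=
  a ≤ p.1 ∧ p.1 ≤ i ∧ j ≤ p.2 ∧ p.2 ≤ b

lemma RD_eq_cnt (A : Finset (ℕ × ℕ)) {r c : ℕ} (h : c < r) : RD A r c = cnt A r c :=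
  if_pos h

lemma mem_PhiPos {n x y : ℕ} : (x, y) ∈ PhiPos n ↔ 1 ≤ y ∧ y < x ∧ x ≤ n := by
  simp only [PhiPos, Finset.mem_filter, Finset.mem_product, Finset.mem_Icc]
  omega

lemma cnt_insert (A : Finset (ℕ × ℕ)) (x : ℕ × ℕ) (hx : x ∉ A) (r c : ℕ) :
    cnt (insert x A) r c = (if r ≤ x.1 ∧ x.2 ≤ c then 1 else 0) + cnt A r c := by
  unfold cnt
  rw [Finset.filter_insert]
  split_ifs with h
  · rw [Finset.card_insert_of_notMem (fun hx' => hx (Finset.mem_of_mem_filter _ hx'))]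
    omega
  · omega

lemma cnt_of_mem (A : Finset (ℕ × ℕ)) {x : ℕ × ℕ} (hx : x ∈ A) (r c : ℕ) :
    cnt A r c = (if r ≤ x.1 ∧ x.2 ≤ c then 1 else 0) + cnt (A.erase x) r c := by
  conv_lhs => rw [← Finset.insert_erase hx]
  exact cnt_insert _ _ (Finset.notMem_erase _ _) r c

lemma cnt_quad (A : Finset (ℕ × ℕ)) (x y : ℕ) (hy : 1 ≤ y) :
    cnt A x y + cnt A (x + 1) (y - 1)
      = cnt A (x + 1) y + cnt A x (y - 1) + (if (x, y) ∈ A then 1 else 0) := by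
  have hind : (if (x, y) ∈ A then 1 else 0)
      = ∑ p ∈ A, if p = (x, y) then (1 : ℕ) else 0 := by
    rw [Finset.sum_ite_eq' A (x, y) (fun _ => 1)]
  unfold cnt
  rw [Finset.card_filter, Finset.card_filter, Finset.card_filter, Finset.card_filter, hind,
    ← Finset.sum_add_distrib, ← Finset.sum_add_distrib, ← Finset.sum_add_distrib]
  refine Finset.sum_congr rfl fun p _ => ?_
  simp only [Prod.ext_iff]
  split_ifs <;> omega

lemma cnt_split (A : Finset (ℕ × ℕ)) (Q : ℕ × ℕ → Prop) [DecidablePred Q] (r c : ℕ) :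
    cnt A r c = cnt (A.filter Q) r c + cnt (A.filter (fun p => ¬ Q p)) r c := by
  unfold cnt
  rw [Finset.filter_comm, Finset.filter_comm (fun p => ¬ Q p)]
  exact (Finset.card_filter_add_card_filter_not (p := Q)).symm

/-- Lemma 3.7: `N⁺(D) ⊆ L⁺(D)`: every `T ∈ N⁺(D)` is a rook placement with
`T < D`, `|T| > |D|`, and every rook placement `S` with `T ≤ S < D` equals `T`. -/
theorem np_subset_lp (n : ℕ) (D : Finset (ℕ × ℕ)) (hD : IsRP n D) :
    ∀ T, inNp D T → inLp n D T := by
  rintro T ⟨i, j, a, b, h0, hja, hab, hbi, hra, hcb, hmid, hcov, hne, hT⟩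
  obtain ⟨hDsub, hDrook⟩ := hD
  obtain ⟨hj1, hji, hin⟩ := mem_PhiPos.mp (hDsub h0)
  have haj : (a, j) ∉ D := fun h => hra ⟨(a, j), h, rfl⟩
  have hib : (i, b) ∉ D := fun h => hcb ⟨(i, b), h, rfl⟩
  have haj' : (a, j) ∉ D.erase (i, j) := fun h => haj (Finset.mem_of_mem_erase h)
  have hib' : (i, b) ∉ insert (a, j) (D.erase (i, j)) := by
    intro h
    rcases Finset.mem_insert.mp h with h | h
    · have h1 : i = a := (Prod.ext_iff.mp h).1
      omega
    · exact hib (Finset.mem_of_mem_erase h)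
  have hDR : ∀ p ∈ D, a ≤ p.1 → p.1 ≤ i → j ≤ p.2 → p.2 ≤ b → p = (i, j) := by
    intro p hp h1 h2 h3 h4
    by_contra hpij
    have h1' : a < p.1 := lt_of_le_of_ne h1 (fun h => hra ⟨p, hp, h.symm⟩)
    have hplt : Plt p (i, j) := ⟨⟨h2, h3⟩, hpij⟩
    have hnlt : ¬ Plt p (a, j) := fun h => absurd h.1.1 (by omega)
    have hc := hcov p hp hplt hnlt
    have hb : p.2 = b := le_antisymm h4 hc.1.2
    exact hcb ⟨p, hp, hb⟩
  have hcntT : ∀ r c, cnt T r c = (if r ≤ i ∧ b ≤ c then 1 else 0) +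
      ((if r ≤ a ∧ j ≤ c then 1 else 0) + cnt (D.erase (i, j)) r c) := by
    intro r c
    rw [hT, cnt_insert _ _ hib', cnt_insert _ _ haj']
  have hcntD : ∀ r c, cnt D r c = (if r ≤ i ∧ j ≤ c then 1 else 0) + cnt (D.erase (i, j)) r c :=
    fun r c => cnt_of_mem D h0 r c
  refine ⟨⟨?_, ?_⟩, ⟨?_, ?_⟩, ?_, ?_⟩
  · -- T ⊆ PhiPos n
    intro p hp
    rw [hT] at hp
    rcases Finset.mem_insert.mp hp with rfl | hp
    · exact mem_PhiPos.mpr ⟨by omega, by omega, by omega⟩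
    rcases Finset.mem_insert.mp hp with rfl | hp
    · exact mem_PhiPos.mpr ⟨by omega, by omega, by omega⟩
    · exact hDsub (Finset.mem_of_mem_erase hp)
  · -- rook property of T
    intro p hp q hq hpq
    rw [hT] at hp hq
    have key : ∀ z ∈ D.erase (i, j), z.1 ≠ i ∧ z.2 ≠ j ∧ z.1 ≠ a ∧ z.2 ≠ b := by
      intro z hz
      obtain ⟨hzne, hzD⟩ := Finset.mem_erase.mp hz
      obtain ⟨r1, r2⟩ := hDrook z hzD (i, j) h0 hzne
      exact ⟨r1, r2, fun h => hra ⟨z, hzD, h⟩, fun h => hcb ⟨z, hzD, h⟩⟩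
    rcases Finset.mem_insert.mp hp with rfl | hp
    · rcases Finset.mem_insert.mp hq with rfl | hq
      · exact absurd rfl hpq
      rcases Finset.mem_insert.mp hq with rfl | hq
      · exact ⟨show i ≠ a by omega, show b ≠ j by omega⟩
      · obtain ⟨k1, k2, k3, k4⟩ := key q hq
        exact ⟨Ne.symm k1, Ne.symm k4⟩
    rcases Finset.mem_insert.mp hp with rfl | hp
    · rcases Finset.mem_insert.mp hq with rfl | hq
      · exact ⟨show a ≠ i by omega, show j ≠ b by omega⟩
      rcases Finset.mem_insert.mp hq with rfl | hq
      · exact absurd rfl hpq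
      · obtain ⟨k1, k2, k3, k4⟩ := key q hq
        exact ⟨Ne.symm k3, Ne.symm k2⟩
    · obtain ⟨k1, k2, k3, k4⟩ := key p hp
      rcases Finset.mem_insert.mp hq with rfl | hq
      · exact ⟨k1, k4⟩
      rcases Finset.mem_insert.mp hq with rfl | hq
      · exact ⟨k3, k2⟩
      · exact hDrook p (Finset.mem_of_mem_erase hp) q (Finset.mem_of_mem_erase hq) hpq
  · -- rpLE T D
    intro r c
    by_cases hrc : c < r
    · rw [RD_eq_cnt _ hrc, RD_eq_cnt _ hrc, hcntT, hcntD]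
      split_ifs <;> omega
    · unfold RD
      rw [if_neg hrc, if_neg hrc]
  · -- T ≠ D
    intro h
    apply haj
    rw [← h, hT]
    exact Finset.mem_insert_of_mem (Finset.mem_insert_self _ _)
  · -- cards
    rw [hT, Finset.card_insert_of_notMem hib', Finset.card_insert_of_notMem haj',
      Finset.card_erase_of_mem h0]
    have h1 : 1 ≤ D.card := Finset.card_pos.mpr ⟨_, h0⟩
    omega
  · -- minimality
    intro S hS hTS hSD
    obtain ⟨hSsub, hSrook⟩ := hS
    obtain ⟨hSDle, hSne⟩ := hSD
    have hceq : ∀ r c, c < r → ¬(a < r ∧ r ≤ i ∧ j ≤ c ∧ c < b) → cnt S r c = cnt D r c := by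
      intro r c h1 h2
      have hTDeq : cnt T r c = cnt D r c := by
        rw [hcntT, hcntD]
        split_ifs <;> omega
      have l1 : cnt S r c ≤ cnt D r c := by
        rw [← RD_eq_cnt _ h1, ← RD_eq_cnt _ h1]; exact hSDle r c
      have l2 : cnt T r c ≤ cnt S r c := by
        rw [← RD_eq_cnt _ h1, ← RD_eq_cnt _ h1]; exact hTS r c
      omega
    have hmemSD : ∀ p : ℕ × ℕ, ¬ Rpred a b i j p → (p ∈ S ↔ p ∈ D) := by
      rintro ⟨x, y⟩ hxy
      have hxy2 : ¬(a ≤ x ∧ x ≤ i ∧ j ≤ y ∧ y ≤ b) := hxy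
      by_cases hxy' : 1 ≤ y ∧ y < x
      · have e1 := cnt_quad S x y hxy'.1
        have e2 := cnt_quad D x y hxy'.1
        have c1 := hceq x y (by omega) (by omega)
        have c2 := hceq (x + 1) (y - 1) (by omega) (by omega)
        have c3 := hceq (x + 1) y (by omega) (by omega)
        have c4 := hceq x (y - 1) (by omega) (by omega)
        rw [c1, c2, c3, c4] at e1
        have hif := Nat.add_left_cancel (e1.symm.trans e2)
        constructor <;> intro h
        · by_contra h'
          rw [if_pos h, if_neg h'] at hif
          exact absurd hif (by omega)
        · by_contra h'
          rw [if_neg h', if_pos h] at hif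
          exact absurd hif (by omega)
      · constructor <;> intro h
        · exact absurd (mem_PhiPos.mp (hSsub h)) (by omega)
        · exact absurd (mem_PhiPos.mp (hDsub h)) (by omega)
    have hDfil : D.filter (Rpred a b i j) = {(i, j)} := by
      apply Finset.ext
      intro p
      simp only [Finset.mem_filter, Finset.mem_singleton]
      constructor
      · rintro ⟨hp, h1, h2, h3, h4⟩
        exact hDR p hp h1 h2 h3 h4
      · rintro rfl
        exact ⟨h0, show a ≤ i by omega, le_rfl, le_rfl, show j ≤ b by omega⟩
    have hSnR : S.filter (fun p => ¬ Rpred a b i j p) = D.filter (fun p => ¬ Rpred a b i j p) := by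
      apply Finset.ext
      intro p
      simp only [Finset.mem_filter]
      constructor
      · rintro ⟨h1, h2⟩; exact ⟨(hmemSD p h2).mp h1, h2⟩
      · rintro ⟨h1, h2⟩; exact ⟨(hmemSD p h2).mpr h1, h2⟩
    have hcol : ∀ y, j ≤ y → y < a →
        ((S.filter (Rpred a b i j)).filter (fun p => a ≤ p.1 ∧ p.2 ≤ y)).card = 1 := by
      intro y h1 h2
      have h3 := hceq a y (by omega) (by omega)
      rw [cnt_split S (Rpred a b i j) a y, cnt_split D (Rpred a b i j) a y, hSnR, hDfil] at h3
      have h4 : cnt {(i, j)} a y = 1 := by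
        show (({(i, j)} : Finset (ℕ × ℕ)).filter _).card = 1
        rw [Finset.filter_singleton, if_pos (show a ≤ i ∧ j ≤ y from ⟨by omega, h1⟩)]
        exact Finset.card_singleton _
      show cnt (S.filter (Rpred a b i j)) a y = 1
      omega
    have hrow : ∀ x, b < x → x ≤ i →
        ((S.filter (Rpred a b i j)).filter (fun p => x ≤ p.1 ∧ p.2 ≤ b)).card = 1 := by
      intro x h1 h2
      have h3 := hceq x b (by omega) (by omega)
      rw [cnt_split S (Rpred a b i j) x b, cnt_split D (Rpred a b i j) x b, hSnR, hDfil] at h3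
      have h4 : cnt {(i, j)} x b = 1 := by
        show (({(i, j)} : Finset (ℕ × ℕ)).filter _).card = 1
        rw [Finset.filter_singleton, if_pos (show x ≤ i ∧ j ≤ b from ⟨h2, by omega⟩)]
        exact Finset.card_singleton _
      show cnt (S.filter (Rpred a b i j)) x b = 1
      omega
    obtain ⟨P1, hP1⟩ := Finset.card_eq_one.mp (hcol (a - 1) (by omega) (by omega))
    have hP1mem : P1 ∈ S.filter (Rpred a b i j) ∧ a ≤ P1.1 ∧ P1.2 ≤ a - 1 :=
      Finset.mem_filter.mp (hP1 ▸ Finset.mem_singleton_self P1)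
    have hP1S : P1 ∈ S := (Finset.mem_filter.mp hP1mem.1).1
    have hP1R : Rpred a b i j P1 := (Finset.mem_filter.mp hP1mem.1).2
    have hP1j : P1.2 = j := by
      obtain ⟨Q, hQ⟩ := Finset.card_eq_one.mp (hcol j le_rfl (by omega))
      have hQmem := Finset.mem_filter.mp (hQ ▸ Finset.mem_singleton_self Q)
      have hQR : Rpred a b i j Q := (Finset.mem_filter.mp hQmem.1).2
      have hQ1 : Q ∈ (S.filter (Rpred a b i j)).filter (fun p => a ≤ p.1 ∧ p.2 ≤ a - 1) :=
        Finset.mem_filter.mpr ⟨hQmem.1, hQmem.2.1, by omega⟩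
      rw [hP1, Finset.mem_singleton] at hQ1
      have h5 : j ≤ Q.2 := hQR.2.2.1
      have h6 : Q.2 ≤ j := hQmem.2.2
      rw [← hQ1]
      omega
    obtain ⟨P2, hP2⟩ := Finset.card_eq_one.mp (hrow (b + 1) (by omega) (by omega))
    have hP2mem : P2 ∈ S.filter (Rpred a b i j) ∧ b + 1 ≤ P2.1 ∧ P2.2 ≤ b :=
      Finset.mem_filter.mp (hP2 ▸ Finset.mem_singleton_self P2)
    have hP2S : P2 ∈ S := (Finset.mem_filter.mp hP2mem.1).1
    have hP2R : Rpred a b i j P2 := (Finset.mem_filter.mp hP2mem.1).2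
    have hP2i : P2.1 = i := by
      obtain ⟨Q, hQ⟩ := Finset.card_eq_one.mp (hrow i (by omega) le_rfl)
      have hQmem := Finset.mem_filter.mp (hQ ▸ Finset.mem_singleton_self Q)
      have hQ1 : Q ∈ (S.filter (Rpred a b i j)).filter (fun p => b + 1 ≤ p.1 ∧ p.2 ≤ b) :=
        Finset.mem_filter.mpr ⟨hQmem.1, by omega, hQmem.2.2⟩
      rw [hP2, Finset.mem_singleton] at hQ1
      have hQR : Rpred a b i j Q := (Finset.mem_filter.mp hQmem.1).2
      have h5 : Q.1 ≤ i := hQR.2.1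
      have h6 : i ≤ Q.1 := hQmem.2.1
      rw [← hQ1]
      omega
    have hforbidRow : ∀ p ∈ S.filter (Rpred a b i j), ¬(a < p.1 ∧ p.1 ≤ b) := by
      rintro p hp ⟨h1, h2⟩
      have hpm := Finset.mem_filter.mp hp
      have hocc : rowOcc D p.1 := by
        rcases eq_or_lt_of_le h2 with he | hl
        · rw [he]; exact (hne (by omega)).1
        · exact (hmid p.1 h1 hl).1
      obtain ⟨q, hqD, hq1⟩ := hocc
      have hqR : ¬ Rpred a b i j q := by
        intro hq
        have heq := hDR q hqD hq.1 hq.2.1 hq.2.2.1 hq.2.2.2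
        rw [heq] at hq1
        have h3 : i = p.1 := hq1
        omega
      have hqS : q ∈ S := (hmemSD q hqR).mpr hqD
      have hpq : p ≠ q := fun h => hqR (h ▸ hpm.2)
      exact (hSrook p hpm.1 q hqS hpq).1 hq1.symm
    have hforbidCol : ∀ p ∈ S.filter (Rpred a b i j), ¬(a ≤ p.2 ∧ p.2 < b) := by
      rintro p hp ⟨h1, h2⟩
      have hpm := Finset.mem_filter.mp hp
      have hocc : colOcc D p.2 := by
        rcases eq_or_lt_of_le h1 with he | hl
        · rw [← he]; exact (hne (by omega)).2
        · exact (hmid p.2 hl h2).2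
      obtain ⟨q, hqD, hq1⟩ := hocc
      have hqR : ¬ Rpred a b i j q := by
        intro hq
        have heq := hDR q hqD hq.1 hq.2.1 hq.2.2.1 hq.2.2.2
        rw [heq] at hq1
        have h3 : j = p.2 := hq1
        omega
      have hqS : q ∈ S := (hmemSD q hqR).mpr hqD
      have hpq : p ≠ q := fun h => hqR (h ▸ hpm.2)
      exact (hSrook p hpm.1 q hqS hpq).2 hq1.symm
    have hclass : ∀ p ∈ S.filter (Rpred a b i j), p = P1 ∨ p = P2 := by
      intro p hp
      have hpm := Finset.mem_filter.mp hp
      have hpR : Rpred a b i j p := hpm.2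
      have hfc := hforbidCol p hp
      have hyx : p.2 < p.1 := (mem_PhiPos (x := p.1) (y := p.2)).mp (by
        have := hSsub hpm.1
        rwa [← Prod.mk.eta (p := p)] at this) |>.2.1
      rcases (by omega : p.2 < a ∨ p.2 = b) with hy | hy
      · left
        have hp1 : p ∈ (S.filter (Rpred a b i j)).filter (fun p => a ≤ p.1 ∧ p.2 ≤ a - 1) :=
          Finset.mem_filter.mpr ⟨hp, hpR.1, by omega⟩
        rw [hP1, Finset.mem_singleton] at hp1
        exact hp1
      · right
        have hp1 : p ∈ (S.filter (Rpred a b i j)).filter (fun p => b + 1 ≤ p.1 ∧ p.2 ≤ b) :=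
          Finset.mem_filter.mpr ⟨hp, by omega, by omega⟩
        rw [hP2, Finset.mem_singleton] at hp1
        exact hp1
    by_cases hPP : P1 = P2
    · exfalso
      apply hSne
      have hP1full : P1 = (i, j) := by
        have h2 : P1.1 = i := by rw [hPP]; exact hP2i
        exact Prod.ext_iff.mpr ⟨h2, hP1j⟩
      apply Finset.ext
      intro p
      by_cases hp : Rpred a b i j p
      · constructor
        · intro hps
          rcases hclass p (Finset.mem_filter.mpr ⟨hps, hp⟩) with h | h
          · rw [h, hP1full]; exact h0
          · rw [h, ← hPP, hP1full]; exact h0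
        · intro hpd
          have h3 := hDR p hpd hp.1 hp.2.1 hp.2.2.1 hp.2.2.2
          rw [h3, ← hP1full]
          exact hP1S
      · exact hmemSD p hp
    · have hP1a : P1.1 = a := by
        by_cases hb : b < P1.1
        · exfalso
          have hp1 : P1 ∈ (S.filter (Rpred a b i j)).filter (fun p => b + 1 ≤ p.1 ∧ p.2 ≤ b) :=
            Finset.mem_filter.mpr ⟨hP1mem.1, by omega, by omega⟩
          rw [hP2, Finset.mem_singleton] at hp1
          exact hPP hp1
        · have := hforbidRow P1 hP1mem.1
          omega
      have hP2b : P2.2 = b := by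
        by_cases hb : P2.2 < a
        · exfalso
          have hp1 : P2 ∈ (S.filter (Rpred a b i j)).filter (fun p => a ≤ p.1 ∧ p.2 ≤ a - 1) :=
            Finset.mem_filter.mpr ⟨hP2mem.1, by omega, by omega⟩
          rw [hP1, Finset.mem_singleton] at hp1
          exact hPP hp1.symm
        · have := hforbidCol P2 hP2mem.1
          omega
      have hP1eq : P1 = (a, j) := Prod.ext_iff.mpr ⟨hP1a, hP1j⟩
      have hP2eq : P2 = (i, b) := Prod.ext_iff.mpr ⟨hP2i, hP2b⟩
      apply Finset.ext
      intro p
      by_cases hp : Rpred a b i j p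
      · constructor
        · intro hps
          rcases hclass p (Finset.mem_filter.mpr ⟨hps, hp⟩) with h | h
          · rw [h, hP1eq, hT]
            exact Finset.mem_insert_of_mem (Finset.mem_insert_self _ _)
          · rw [h, hP2eq, hT]
            exact Finset.mem_insert_self _ _
        · intro hpt
          rw [hT] at hpt
          rcases Finset.mem_insert.mp hpt with rfl | hpt
          · rw [← hP2eq]; exact hP2S
          rcases Finset.mem_insert.mp hpt with rfl | hpt
          · rw [← hP1eq]; exact hP1S
          · obtain ⟨hpne, hpD⟩ := Finset.mem_erase.mp hpt
            exact absurd (hDR p hpD hp.1 hp.2.1 hp.2.2.1 hp.2.2.2) hpne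
      · rw [hmemSD p hp, hT]
        simp only [Finset.mem_insert, Finset.mem_erase]
        constructor
        · intro hpd
          right; right
          refine ⟨?_, hpd⟩
          intro h
          rw [h] at hp
          exact hp ⟨show a ≤ i by omega, le_rfl, le_rfl, show j ≤ b by omega⟩
        · rintro (rfl | rfl | ⟨_, hpd⟩)
          · exact absurd (show Rpred a b i j (i, b) from
              ⟨show a ≤ i by omega, le_rfl, show j ≤ b by omega, le_rfl⟩) hp
          · exact absurd (show Rpred a b i j (a, j) from
              ⟨le_rfl, show a ≤ i by omega, le_rfl, show j ≤ b by omega⟩) hp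
          · exact hpd
end
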